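/- Suppose the ring E of degree-0 graded T-endomorphisms of T³ satisfies dim_F E = 2. Then every maximal element I of the (nonempty, partially ordered by inclusion) set of nonzero abelian graded ideals of T equals T^k = ⊕_{i ≥ k} T_i for some k ≥ 2; consequently T has at most one maximal nonzero abelian graded ideal. -/

import Mathlib

open Submodule

/-- `T` is a graded Lie algebra generated in degree 1 with `dim_F T_i = 2` for `i ≠ 2`
and `dim_F T_2 = 1`. -/
structure IsThinGrading (F : Type*) [Field F] (T : Type*) [LieRing T] [LieAlgebra F T]
    (Tc : ℕ → Submodule F T) : Prop where
  zero_bot : Tc 0 = ⊥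
  internal : DirectSum.IsInternal Tc
  lie_mem : ∀ i j : ℕ, ∀ x ∈ Tc i, ∀ y ∈ Tc j, ⁅x, y⁆ ∈ Tc (i + j)
  gen : LieSubalgebra.lieSpan F T (Tc 1 : Set T) = ⊤
  finrank_eq_two : ∀ i : ℕ, 1 ≤ i → i ≠ 2 → Module.finrank F ↥(Tc i) = 2
  finrank_two : Module.finrank F ↥(Tc 2) = 1

/-- A Lie ideal `I` of `T` is graded if `I = ⊕_{i ≥ 1} (I ∩ T_i)`. -/
def IsGradedIdeal (F : Type*) [Field F] {T : Type*} [LieRing T] [LieAlgebra F T]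
    (Tc : ℕ → Submodule F T) (I : LieIdeal F T) : Prop :=
  (I : Submodule F T) = ⨆ i : ℕ, ⨆ _ : 1 ≤ i, ((I : Submodule F T) ⊓ Tc i)

/-- `T³ = ⊕_{i ≥ 3} T_i`. -/
def Tcube (F : Type*) [Field F] (T : Type*) [LieRing T] [LieAlgebra F T]
    (Tc : ℕ → Submodule F T) : Submodule F T :=
  ⨆ i : ℕ, ⨆ _ : 3 ≤ i, Tc i

/-- The ring (here: the `F`-subspace) of degree-0 graded `T`-endomorphisms of `T³`:
`F`-linear maps `φ : T³ → T³` with `φ(T_i) ⊆ T_i` for `i ≥ 3` and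
`φ(⁅u, t⁆) = ⁅φ(u), t⁆` for `u ∈ T³`, `t ∈ T`. -/
def adjGrend (F : Type*) [Field F] (T : Type*) [LieRing T] [LieAlgebra F T]
    (Tc : ℕ → Submodule F T) :
    Submodule F (↥(Tcube F T Tc) →ₗ[F] ↥(Tcube F T Tc)) where
  carrier := {φ |
    (∀ i : ℕ, 3 ≤ i → ∀ u : ↥(Tcube F T Tc), (u : T) ∈ Tc i → ((φ u : T) ∈ Tc i)) ∧
    ∀ (u w : ↥(Tcube F T Tc)) (t : T),
      (w : T) = ⁅(u : T), t⁆ → (φ w : T) = ⁅(φ u : T), t⁆}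
  add_mem' := by
    rintro φ ψ ⟨h1, h2⟩ ⟨k1, k2⟩
    refine ⟨fun i hi u hu => ?_, fun u w t hw => ?_⟩
    · simpa using add_mem (h1 i hi u hu) (k1 i hi u hu)
    · simp [h2 u w t hw, k2 u w t hw, add_lie]
  zero_mem' := ⟨fun i hi u hu => by simp, fun u w t hw => by simp⟩
  smul_mem' := by
    rintro c φ ⟨h1, h2⟩
    refine ⟨fun i hi u hu => ?_, fun u w t hw => ?_⟩
    · simpa using Submodule.smul_mem _ c (h1 i hi u hu)
    · simp [h2 u w t hw, smul_lie]

section S19Aux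

open Module LinearMap

variable {F : Type*} [Field F] {T : Type*} [LieRing T] [LieAlgebra F T]
  {Tc : ℕ → Submodule F T}

/-! ### Component projections -/

noncomputable def S19.cptD (hT : IsThinGrading F T Tc) :
    T ≃ₗ[F] DirectSum ℕ (fun i => ↥(Tc i)) :=
  (LinearEquiv.ofBijective (DirectSum.coeLinearMap Tc) hT.internal).symm

noncomputable def S19.cpt (hT : IsThinGrading F T Tc) (i : ℕ) : T →ₗ[F] T :=
  (Tc i).subtype ∘ₗ (DirectSum.component F ℕ (fun i => ↥(Tc i)) i) ∘ₗ
    (S19.cptD hT).toLinearMap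

namespace S19

lemma cpt_apply (hT : IsThinGrading F T Tc) (i : ℕ) (x : T) :
    cpt hT i x = ↑(cptD hT x i) := rfl

lemma cpt_mem (hT : IsThinGrading F T Tc) (i : ℕ) (x : T) : cpt hT i x ∈ Tc i :=
  (cptD hT x i).2

lemma cpt_of_mem (hT : IsThinGrading F T Tc) {i : ℕ} {x : T} (h : x ∈ Tc i) :
    cpt hT i x = x := by
  rw [cpt_apply]
  rw [show cptD hT x i = ⟨x, h⟩ from hT.internal.ofBijective_coeLinearMap_of_mem h]

lemma cpt_of_mem_ne (hT : IsThinGrading F T Tc) {i j : ℕ} {x : T} (hne : j ≠ i)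
    (h : x ∈ Tc j) : cpt hT i x = 0 := by
  rw [cpt_apply]
  rw [show cptD hT x i = 0 from hT.internal.ofBijective_coeLinearMap_of_mem_ne hne h]
  rfl

lemma sum_cpt (hT : IsThinGrading F T Tc) (x : T) :
    ∃ s : Finset ℕ, (∀ i, i ∉ s → cpt hT i x = 0) ∧ (∑ i ∈ s, cpt hT i x) = x := by
  classical
  refine ⟨(cptD hT x).support, fun i hi => ?_, ?_⟩
  · rw [cpt_apply, DFinsupp.notMem_support_iff.mp hi]; rfl
  · have h1 : DirectSum.coeLinearMap Tc (cptD hT x) = x := by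
      have := (LinearEquiv.ofBijective (DirectSum.coeLinearMap Tc)
        hT.internal).apply_symm_apply x
      exact this
    calc (∑ i ∈ (cptD hT x).support, cpt hT i x)
        = ∑ i ∈ (cptD hT x).support,
            DirectSum.coeLinearMap Tc (DirectSum.of (fun i => ↥(Tc i)) i (cptD hT x i)) := by
          refine Finset.sum_congr rfl fun i _ => ?_
          rw [DirectSum.coeLinearMap_of, cpt_apply]
      _ = DirectSum.coeLinearMap Tc (∑ i ∈ (cptD hT x).support,
            DirectSum.of (fun i => ↥(Tc i)) i (cptD hT x i)) := by rw [map_sum]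
      _ = x := by rw [DirectSum.sum_support_of]; exact h1

lemma cpt_zero (hT : IsThinGrading F T Tc) (x : T) : cpt hT 0 x = 0 := by
  have := cpt_mem hT 0 x
  rw [hT.zero_bot] at this
  simpa using this

/-! ### Graded pieces suprema -/

lemma le_iSup_ge (M : ℕ → Submodule F T) {m i : ℕ} (h : m ≤ i) :
    M i ≤ ⨆ j, ⨆ _ : m ≤ j, M j :=
  le_iSup_of_le i (le_iSup_of_le h le_rfl)

lemma cpt_mem_of_mem_iSup_ge (hT : IsThinGrading F T Tc) {M : ℕ → Submodule F T} {m : ℕ}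
    (hM : ∀ i, m ≤ i → M i ≤ Tc i) {x : T} (hx : x ∈ ⨆ i, ⨆ _ : m ≤ i, M i) (j : ℕ) :
    cpt hT j x ∈ M j := by
  have hle : (⨆ i, ⨆ _ : m ≤ i, M i) ≤ Submodule.comap (cpt hT j) (M j) := by
    refine iSup_le fun i => iSup_le fun hmi y hy => ?_
    by_cases hij : i = j
    · subst hij
      simpa [Submodule.mem_comap, cpt_of_mem hT (hM i hmi hy)] using hy
    · simp [Submodule.mem_comap, cpt_of_mem_ne hT hij (hM i hmi hy)]
  exact hle hx

lemma cpt_eq_zero_of_mem_iSup_ge (hT : IsThinGrading F T Tc) {M : ℕ → Submodule F T}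
    {m : ℕ} (hM : ∀ i, m ≤ i → M i ≤ Tc i) {x : T} (hx : x ∈ ⨆ i, ⨆ _ : m ≤ i, M i)
    {j : ℕ} (hj : ¬ m ≤ j) : cpt hT j x = 0 := by
  have hle : (⨆ i, ⨆ _ : m ≤ i, M i) ≤ LinearMap.ker (cpt hT j) := by
    refine iSup_le fun i => iSup_le fun hmi y hy => ?_
    have hij : i ≠ j := fun h => hj (h ▸ hmi)
    simp [LinearMap.mem_ker, cpt_of_mem_ne hT hij (hM i hmi hy)]
  exact hle hx

lemma mem_iSup_ge_of_cpt (hT : IsThinGrading F T Tc) {M : ℕ → Submodule F T} {m : ℕ}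
    {x : T} (h0 : ∀ i, ¬ m ≤ i → cpt hT i x = 0) (h1 : ∀ i, m ≤ i → cpt hT i x ∈ M i) :
    x ∈ ⨆ i, ⨆ _ : m ≤ i, M i := by
  obtain ⟨s, hs0, hsum⟩ := sum_cpt hT x
  rw [← hsum]
  refine Submodule.sum_mem _ fun i _ => ?_
  by_cases hm : m ≤ i
  · exact le_iSup_ge M hm (h1 i hm)
  · rw [h0 i hm]; exact zero_mem _

/-! ### Tcube and graded ideals -/

lemma Tc_le_Tcube {i : ℕ} (h : 3 ≤ i) : Tc i ≤ Tcube F T Tc :=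
  le_iSup_ge Tc h

lemma cpt_Tcube_zero (hT : IsThinGrading F T Tc) {x : T} (hx : x ∈ Tcube F T Tc)
    {i : ℕ} (hi : ¬ 3 ≤ i) : cpt hT i x = 0 :=
  cpt_eq_zero_of_mem_iSup_ge hT (fun _ _ => le_rfl) hx hi

lemma cpt_mem_Tcube (hT : IsThinGrading F T Tc) {x : T} (hx : x ∈ Tcube F T Tc)
    (i : ℕ) : cpt hT i x ∈ Tcube F T Tc := by
  by_cases hi : 3 ≤ i
  · exact Tc_le_Tcube hi (cpt_mem hT i x)
  · rw [cpt_Tcube_zero hT hx hi]; exact zero_mem _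

lemma graded_cpt_mem (hT : IsThinGrading F T Tc) {I : LieIdeal F T}
    (hGI : IsGradedIdeal F Tc I) {x : T} (hx : x ∈ (I : Submodule F T)) (j : ℕ) :
    cpt hT j x ∈ (I : Submodule F T) := by
  rw [hGI] at hx
  exact (cpt_mem_of_mem_iSup_ge hT
    (M := fun i => (I : Submodule F T) ⊓ Tc i) (fun i _ => inf_le_right) hx j).1

/-! ### Bracket facts -/

lemma lie_sum' {s : Finset ℕ} (u : T) (f : ℕ → T) :
    ⁅u, ∑ j ∈ s, f j⁆ = ∑ j ∈ s, ⁅u, f j⁆ := by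
  classical
  induction s using Finset.induction with
  | empty => simp
  | insert _ _ h ih => rw [Finset.sum_insert h, Finset.sum_insert h, lie_add, ih]

lemma lie_Tc_mem_Tcube (hT : IsThinGrading F T Tc) {i : ℕ} (hi : 3 ≤ i) {u : T}
    (hu : u ∈ Tc i) (t : T) : ⁅u, t⁆ ∈ Tcube F T Tc := by
  obtain ⟨s, _, hsum⟩ := sum_cpt hT t
  have heq : (⁅u, t⁆ : T) = ∑ j ∈ s, ⁅u, cpt hT j t⁆ := by
    conv_lhs => rw [← hsum]
    exact lie_sum' u _
  rw [heq]
  refine Submodule.sum_mem _ fun j _ => ?_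
  exact Tc_le_Tcube (by omega) (hT.lie_mem i j u hu _ (cpt_mem hT j t))

lemma lie_mem_Tcube (hT : IsThinGrading F T Tc) {u : T} (hu : u ∈ Tcube F T Tc)
    (t : T) : ⁅u, t⁆ ∈ Tcube F T Tc := by
  have key : Tcube F T Tc ≤ Submodule.comap (LieAlgebra.ad F T t) (Tcube F T Tc) := by
    refine iSup_le fun i => iSup_le fun hi y hy => ?_
    have h1 : ⁅y, t⁆ ∈ Tcube F T Tc := lie_Tc_mem_Tcube hT hi hy t
    have h2 : (⁅t, y⁆ : T) = -⁅y, t⁆ := (lie_skew t y).symm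
    simp only [Submodule.mem_comap, LieAlgebra.ad_apply, h2]
    exact neg_mem h1
  have h3 : ⁅t, u⁆ ∈ Tcube F T Tc := key hu
  have h4 : (⁅u, t⁆ : T) = -⁅t, u⁆ := (lie_skew u t).symm
  rw [h4]; exact neg_mem h3

end S19

/-! ### The generated subalgebra -/

def S19.bspan (U V : Submodule F T) : Submodule F T :=
  Submodule.span F (Set.image2 (fun u v => ⁅u, v⁆) (U : Set T) (V : Set T))

def S19.Sc (Tc : ℕ → Submodule F T) : ℕ → Submodule F T
  | 0 => ⊥
  | 1 => Tc 1
  | (n+2) => S19.bspan (S19.Sc Tc (n+1)) (Tc 1)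

namespace S19

lemma bspan_le_of {U V P : Submodule F T} (h : ∀ u ∈ U, ∀ v ∈ V, ⁅u, v⁆ ∈ P) :
    bspan U V ≤ P := by
  rw [bspan, Submodule.span_le]
  rintro z ⟨u, hu, v, hv, rfl⟩
  exact h u hu v hv

lemma lie_mem_bspan {U V : Submodule F T} {u v : T} (hu : u ∈ U) (hv : v ∈ V) :
    ⁅u, v⁆ ∈ bspan U V :=
  Submodule.subset_span (Set.mem_image2_of_mem hu hv)

lemma bspan_mono_left {U U' V : Submodule F T} (h : U ≤ U') : bspan U V ≤ bspan U' V :=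
  Submodule.span_mono (Set.image2_subset_right h)

lemma Sc_le_Tc (hT : IsThinGrading F T Tc) : ∀ i, Sc Tc i ≤ Tc i := by
  intro i
  induction i using Nat.strong_induction_on with
  | _ i ih =>
    match i with
    | 0 => exact bot_le
    | 1 => exact le_rfl
    | (n+2) =>
      refine bspan_le_of fun u hu v hv => ?_
      exact hT.lie_mem (n+1) 1 u (ih (n+1) (by omega) hu) v hv

lemma lie_Sc_Sc (hT : IsThinGrading F T Tc) :
    ∀ j i, ∀ x ∈ Sc Tc i, ∀ y ∈ Sc Tc j, ⁅x, y⁆ ∈ Sc Tc (i + j) := by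
  intro j
  induction j using Nat.strong_induction_on with
  | _ j ih =>
    match j with
    | 0 => intro i x _ y hy; simp only [Sc, Submodule.mem_bot] at hy; simp [hy]
    | 1 =>
      intro i x hx y hy
      match i with
      | 0 => simp only [Sc, Submodule.mem_bot] at hx; simp [hx]
      | (n+1) => exact lie_mem_bspan hx hy
    | (m+2) =>
      intro i x hx y hy
      have hy' : y ∈ Submodule.span F
          (Set.image2 (fun u v => ⁅u, v⁆) (Sc Tc (m+1) : Set T) (Tc 1 : Set T)) := hy
      induction hy' using Submodule.span_induction with
      | mem z hz =>
        obtain ⟨u, hu, b, hb, rfl⟩ := hz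
        have hxu : ⁅x, u⁆ ∈ Sc Tc (i + (m+1)) := ih (m+1) (by omega) i x hx u hu
        have hxb : ⁅x, b⁆ ∈ Sc Tc (i + 1) := ih 1 (by omega) i x hx b hb
        have t1 : ⁅⁅x, u⁆, b⁆ ∈ Sc Tc (i + (m+2)) := by
          have := ih 1 (by omega) (i + (m+1)) _ hxu b hb
          simpa [show i + (m+1) + 1 = i + (m+2) by omega] using this
        have t2 : ⁅u, ⁅x, b⁆⁆ ∈ Sc Tc (i + (m+2)) := by
          have h5 : ⁅⁅x, b⁆, u⁆ ∈ Sc Tc (i + 1 + (m+1)) :=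
            ih (m+1) (by omega) (i+1) _ hxb u hu
          have h6 : (⁅u, ⁅x, b⁆⁆ : T) = -⁅⁅x, b⁆, u⁆ := (lie_skew u ⁅x, b⁆).symm
          rw [h6]
          have : i + 1 + (m+1) = i + (m+2) := by omega
          rw [this] at h5
          exact neg_mem h5
        have hj : (⁅x, ⁅u, b⁆⁆ : T) = ⁅⁅x, u⁆, b⁆ + ⁅u, ⁅x, b⁆⁆ := by
          rw [leibniz_lie]
        rw [hj]; exact add_mem t1 t2
      | zero => simp only [lie_zero]; exact zero_mem _
      | add a b hma hmb iha ihb => rw [lie_add]; exact add_mem (iha hma) (ihb hmb)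
      | smul c a hma iha => rw [lie_smul]; exact Submodule.smul_mem _ c (iha hma)

lemma iSup_Sc_eq_top (hT : IsThinGrading F T Tc) : (⨆ i, Sc Tc i) = ⊤ := by
  set W : LieSubalgebra F T :=
    { toSubmodule := ⨆ i, Sc Tc i
      lie_mem' := by
        intro x y hx hy
        have key : ∀ i, ∀ x ∈ Sc Tc i, ∀ y ∈ (⨆ j, Sc Tc j), ⁅x, y⁆ ∈ ⨆ j, Sc Tc j := by
          intro i x hx y hy
          refine Submodule.iSup_induction _ (motive := fun y => ⁅x, y⁆ ∈ ⨆ j, Sc Tc j) hy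
            (fun j z hz => ?_)
            (show ⁅x, (0:T)⁆ ∈ _ by rw [lie_zero]; exact zero_mem _)
            (fun a b ha hb => show ⁅x, a + b⁆ ∈ _ by rw [lie_add]; exact add_mem ha hb)
          exact le_iSup (Sc Tc) (i + j) (lie_Sc_Sc hT j i x hx z hz)
        refine Submodule.iSup_induction _ (motive := fun x => ⁅x, y⁆ ∈ ⨆ j, Sc Tc j) hx
          (fun i z hz => key i z hz y hy)
          (show ⁅(0:T), y⁆ ∈ _ by rw [zero_lie]; exact zero_mem _)
          (fun a b ha hb => show ⁅a + b, y⁆ ∈ _ by rw [add_lie]; exact add_mem ha hb) } with hW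
  have h1 : LieSubalgebra.lieSpan F T (Tc 1 : Set T) ≤ W := by
    rw [LieSubalgebra.lieSpan_le]
    intro x hx
    have : x ∈ Sc Tc 1 := hx
    exact le_iSup (Sc Tc) 1 this
  rw [hT.gen] at h1
  rw [eq_top_iff]
  intro x _
  exact h1 (LieSubalgebra.mem_top x)

lemma Tc_succ_le_bspan (hT : IsThinGrading F T Tc) {i : ℕ} (hi : 1 ≤ i) :
    Tc (i+1) ≤ bspan (Tc i) (Tc 1) := by
  intro x hx
  have hxtop : x ∈ ⨆ j, Sc Tc j := by rw [iSup_Sc_eq_top hT]; trivial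
  have hcomap : (⨆ j, Sc Tc j) ≤ Submodule.comap (cpt hT (i+1)) (Sc Tc (i+1)) := by
    refine iSup_le fun j y hy => ?_
    by_cases hij : j = i + 1
    · subst hij
      rw [Submodule.mem_comap, cpt_of_mem hT (Sc_le_Tc hT (i+1) hy)]
      exact hy
    · simp [Submodule.mem_comap, cpt_of_mem_ne hT hij (Sc_le_Tc hT j hy)]
  have h3 : cpt hT (i+1) x ∈ Sc Tc (i+1) := hcomap hxtop
  rw [cpt_of_mem hT hx] at h3
  obtain ⟨n, rfl⟩ : ∃ n, i = n + 1 := ⟨i - 1, by omega⟩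
  exact bspan_mono_left (Sc_le_Tc hT (n+1)) h3

end S19

end S19Aux
section S19Aux2

open Module LinearMap

variable {F : Type*} [Field F] {T : Type*} [LieRing T] [LieAlgebra F T]
  {Tc : ℕ → Submodule F T}

namespace S19

/-! ### Finiteness -/

lemma finite_of_sub_quot (S : Submodule F T) (h1 : Module.Finite F ↥S)
    (h2 : Module.Finite F (T ⧸ S)) : Module.Finite F T := by
  rw [Module.finite_def]
  apply Submodule.fg_of_fg_map_of_fg_inf_ker S.mkQ
  · rw [Submodule.map_top, Submodule.range_mkQ]
    exact Module.finite_def.mp h2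
  · rw [top_inf_eq, Submodule.ker_mkQ]
    exact Module.Finite.iff_fg.mp h1

lemma Tc_ne_bot (hT : IsThinGrading F T Tc) {i : ℕ} (hi : 1 ≤ i) : Tc i ≠ ⊥ := by
  intro h
  by_cases h2 : i = 2
  · have := hT.finrank_two
    rw [h2] at h
    rw [h, finrank_bot] at this
    exact absurd this (by norm_num)
  · have := hT.finrank_eq_two i hi h2
    rw [h, finrank_bot] at this
    exact absurd this (by norm_num)

lemma not_finite_T (hT : IsThinGrading F T Tc) : ¬ Module.Finite F T := by
  intro hfin
  have hne : ∀ n : ℕ, ∃ x ∈ Tc (n+1), x ≠ 0 := fun n =>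
    (Submodule.ne_bot_iff _).mp (Tc_ne_bot hT (by omega : 1 ≤ n+1))
  choose v hv hv0 using hne
  have hindep : iSupIndep (fun n : ℕ => Tc (n+1)) :=
    hT.internal.submodule_iSupIndep.comp Nat.succ_injective
  have hind := hindep.linearIndependent (fun n : ℕ => Tc (n+1)) (v := v) hv hv0
  have : Finite ℕ := hind.finite
  exact absurd this (by rw [not_finite_iff_infinite]; infer_instance)

/-! ### The centre is trivial -/

lemma eq_zero_of_lie_Tc1 (hT : IsThinGrading F T Tc)
    (hJI : ∀ I : LieIdeal F T, IsGradedIdeal F Tc I → I ≠ ⊥ →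
      Module.Finite F (T ⧸ (I : Submodule F T)))
    {j : ℕ} {x : T} (hj : 1 ≤ j) (hx : x ∈ Tc j)
    (hc : ∀ y ∈ Tc 1, ⁅x, y⁆ = 0) : x = 0 := by
  by_contra hx0
  have hcent : ∀ t : T, ⁅x, t⁆ = 0 := by
    set C : LieSubalgebra F T :=
      { toSubmodule := LinearMap.ker ((LieAlgebra.ad F T) x)
        lie_mem' := by
          intro a b ha hb
          have ha' : ⁅x, a⁆ = 0 := ha
          have hb' : ⁅x, b⁆ = 0 := hb
          show ⁅x, ⁅a, b⁆⁆ = 0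
          rw [leibniz_lie, ha', hb', zero_lie, lie_zero, add_zero] }
    have h1 : LieSubalgebra.lieSpan F T (Tc 1 : Set T) ≤ C := by
      rw [LieSubalgebra.lieSpan_le]
      intro y hy
      exact hc y hy
    rw [hT.gen] at h1
    intro t
    exact h1 (LieSubalgebra.mem_top t)
  set K : LieIdeal F T :=
    { toSubmodule := Submodule.span F {x}
      lie_mem := by
        intro t m hm
        obtain ⟨a, rfl⟩ := Submodule.mem_span_singleton.mp hm
        have : ⁅t, a • x⁆ = a • ⁅t, x⁆ := lie_smul a t x
        have h0 : ⁅t, x⁆ = 0 := by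
          have := hcent t
          have h2 : (⁅t, x⁆ : T) = -⁅x, t⁆ := (lie_skew t x).symm
          rw [h2, this, neg_zero]
        show ⁅t, a • x⁆ ∈ Submodule.span F {x}
        rw [this, h0, smul_zero]
        exact zero_mem _ }
  have hGIK : IsGradedIdeal F Tc K := by
    refine le_antisymm ?_ (iSup_le fun i => iSup_le fun _ => inf_le_left)
    intro z hz
    have hz' : z ∈ Submodule.span F {x} := hz
    refine Submodule.span_le.mpr ?_ hz'
    intro w hw
    rcases Set.mem_singleton_iff.mp hw with rfl
    have : w ∈ (K : Submodule F T) ⊓ Tc j :=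
      ⟨Submodule.subset_span rfl, hx⟩
    exact le_iSup_ge (fun i => (K : Submodule F T) ⊓ Tc i) hj this
  have hKne : K ≠ ⊥ := by
    intro h
    apply hx0
    have hxK : x ∈ K := Submodule.subset_span rfl
    rw [h] at hxK
    simpa using hxK
  have hq := hJI K hGIK hKne
  have hs : Module.Finite F ↥(Submodule.span F ({x} : Set T)) := by infer_instance
  exact not_finite_T hT (finite_of_sub_quot (Submodule.span F {x}) hs hq)

/-! ### Graded ideals contain a tail -/

lemma Tc_tail_le_ideal (hT : IsThinGrading F T Tc) {I : LieIdeal F T} {i : ℕ}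
    (hi : 1 ≤ i) (h : Tc i ≤ (I : Submodule F T)) :
    ∀ j, i ≤ j → Tc j ≤ (I : Submodule F T) := by
  intro j hj
  induction j, hj using Nat.le_induction with
  | base => exact h
  | succ n hn ih =>
    refine le_trans (Tc_succ_le_bspan hT (by omega)) ?_
    refine bspan_le_of fun u hu v hv => ?_
    have h1 : ⁅v, u⁆ ∈ I := I.lie_mem (ih hu)
    have h2 : (⁅u, v⁆ : T) = -⁅v, u⁆ := (lie_skew u v).symm
    rw [h2]
    exact neg_mem h1

lemma exists_tail_le (hT : IsThinGrading F T Tc)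
    (hJI : ∀ I : LieIdeal F T, IsGradedIdeal F Tc I → I ≠ ⊥ →
      Module.Finite F (T ⧸ (I : Submodule F T)))
    {I : LieIdeal F T} (hGI : IsGradedIdeal F Tc I) (hne : I ≠ ⊥) :
    ∃ n : ℕ, 1 ≤ n ∧ ∀ i, n ≤ i → Tc i ≤ (I : Submodule F T) := by
  have hfin := hJI I hGI hne
  by_contra hcon
  push_neg at hcon
  set B : Set ℕ := {i | ¬ Tc i ≤ (I : Submodule F T)} with hB
  have hBinf : B.Infinite := by
    apply Set.infinite_of_not_bddAbove
    rintro ⟨b, hb⟩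
    obtain ⟨i, hi, hiB⟩ := hcon (b+1) (by omega)
    exact absurd (hb hiB) (by omega)
  have hex : ∀ i : B, ∃ x, x ∈ Tc i ∧ x ∉ (I : Submodule F T) := by
    rintro ⟨i, hi⟩
    exact SetLike.not_le_iff_exists.mp hi
  choose xf hxfTc hxfI using hex
  set v : B → T ⧸ (I : Submodule F T) :=
    fun i => Submodule.Quotient.mk (xf i) with hv
  have hind : LinearIndependent F v := by
    rw [linearIndependent_iff']
    intro s g hsum i0 hi0
    have hy : (∑ i ∈ s, g i • xf i) ∈ (I : Submodule F T) := by
      rw [← Submodule.Quotient.mk_eq_zero]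
      have : (Submodule.Quotient.mk (∑ i ∈ s, g i • xf i) :
          T ⧸ (I : Submodule F T)) = ∑ i ∈ s, g i • v i := by
        rw [← Submodule.mkQ_apply, map_sum]
        refine Finset.sum_congr rfl fun i _ => ?_
        rw [map_smul, Submodule.mkQ_apply]
      rw [this, hsum]
    have hcpt := graded_cpt_mem hT hGI hy (i0 : ℕ)
    have heq : cpt hT (i0 : ℕ) (∑ i ∈ s, g i • xf i) = g i0 • xf i0 := by
      rw [map_sum]
      rw [Finset.sum_eq_single i0]
      · rw [map_smul, cpt_of_mem hT (hxfTc i0)]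
      · intro i his hine
        rw [map_smul, cpt_of_mem_ne hT (fun hc => hine (Subtype.ext hc)) (hxfTc i),
          smul_zero]
      · intro h; exact absurd hi0 h
    rw [heq] at hcpt
    by_contra hg
    apply hxfI i0
    have : xf i0 = (g i0)⁻¹ • (g i0 • xf i0) := by
      rw [smul_smul, inv_mul_cancel₀ hg, one_smul]
    rw [this]
    exact Submodule.smul_mem _ _ hcpt
  have : Finite ↥B := hind.finite
  exact hBinf (Set.finite_coe_iff.mp this)

/-! ### Dimension helpers -/

lemma finrank_le_of_le {V : Type*} [AddCommGroup V] [Module F V] {N M : Submodule F V}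
    (hle : N ≤ M) [FiniteDimensional F ↥M] : finrank F ↥N ≤ finrank F ↥M :=
  Submodule.finrank_mono hle

lemma full_of_rank_one {V : Type*} [AddCommGroup V] [Module F V] {N M : Submodule F V}
    (hle : N ≤ M) (h1 : finrank F ↥M = 1) (hne : N ≠ ⊥) : M ≤ N := by
  haveI : FiniteDimensional F ↥M := FiniteDimensional.of_finrank_pos (by omega)
  haveI : FiniteDimensional F ↥N := Submodule.finiteDimensional_of_le hle
  have hpos : 0 < finrank F ↥N := by
    rw [Module.finrank_pos_iff]
    exact Submodule.nontrivial_iff_ne_bot.mpr hne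
  have hle' : finrank F ↥N ≤ 1 := h1 ▸ Submodule.finrank_mono hle
  exact (Submodule.eq_of_le_of_finrank_le hle (by omega)).ge

lemma full_of_pair {V : Type*} [AddCommGroup V] [Module F V]
    {N M : Submodule F V} (hle : N ≤ M) (h2 : finrank F ↥M = 2) {u w : V}
    (hu : u ∈ N) (hw : w ∈ N) (hind : LinearIndependent F ![u, w]) : M ≤ N := by
  haveI : FiniteDimensional F ↥M := FiniteDimensional.of_finrank_pos (by omega)
  haveI : FiniteDimensional F ↥N := Submodule.finiteDimensional_of_le hle
  set vN : Fin 2 → ↥N := ![⟨u, hu⟩, ⟨w, hw⟩] with hvN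
  have hcomp : N.subtype ∘ vN = ![u, w] := by
    funext i
    fin_cases i <;> simp [hvN]
  have hindN : LinearIndependent F vN := by
    apply LinearIndependent.of_comp N.subtype
    rw [hcomp]
    exact hind
  have h2' : 2 ≤ finrank F ↥N := by
    simpa using hindN.fintype_card_le_finrank
  exact (Submodule.eq_of_le_of_finrank_le hle (by omega)).ge

lemma pair_dep {u w : T} (hu : u ≠ 0) (hnind : ¬ LinearIndependent F ![u, w]) :
    ∃ c : F, w = c • u := by
  rw [LinearIndependent.pair_iff' hu] at hnind
  push_neg at hnind
  obtain ⟨a, ha⟩ := hnind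
  exact ⟨a, ha.symm⟩

end S19

end S19Aux2
section S19Aux3

open Module LinearMap

variable {F : Type*} [Field F] {T : Type*} [LieRing T] [LieAlgebra F T]
  {Tc : ℕ → Submodule F T}

namespace S19

/-! ### The endomorphism algebra E -/

lemma mem_adjGrend_iff {φ : ↥(Tcube F T Tc) →ₗ[F] ↥(Tcube F T Tc)} :
    φ ∈ adjGrend F T Tc ↔
      (∀ i : ℕ, 3 ≤ i → ∀ u : ↥(Tcube F T Tc), (u : T) ∈ Tc i → ((φ u : T) ∈ Tc i)) ∧
      ∀ (u w : ↥(Tcube F T Tc)) (t : T),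
        (w : T) = ⁅(u : T), t⁆ → (φ w : T) = ⁅(φ u : T), t⁆ :=
  Iff.rfl

lemma id_mem_adjGrend : (LinearMap.id : ↥(Tcube F T Tc) →ₗ[F] ↥(Tcube F T Tc)) ∈
    adjGrend F T Tc := by
  rw [mem_adjGrend_iff]
  exact ⟨fun i hi u hu => hu, fun u w t hw => hw⟩

lemma exists_nonscalar (hE : Module.finrank F ↥(adjGrend F T Tc) = 2) :
    ∃ θ ∈ adjGrend F T Tc, ∀ c : F,
      θ ≠ c • (LinearMap.id : ↥(Tcube F T Tc) →ₗ[F] ↥(Tcube F T Tc)) := by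
  by_contra hcon
  push_neg at hcon
  have hle : adjGrend F T Tc ≤ Submodule.span F
      {(LinearMap.id : ↥(Tcube F T Tc) →ₗ[F] ↥(Tcube F T Tc))} := by
    intro θ hθ
    obtain ⟨c, rfl⟩ := hcon θ hθ
    exact Submodule.smul_mem _ c (Submodule.subset_span rfl)
  have h1 : finrank F ↥(Submodule.span F
      {(LinearMap.id : ↥(Tcube F T Tc) →ₗ[F] ↥(Tcube F T Tc))}) ≤ 1 := by
    by_cases h : (LinearMap.id : ↥(Tcube F T Tc) →ₗ[F] ↥(Tcube F T Tc)) = 0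
    · rw [h]
      rw [Submodule.span_zero_singleton]
      simp [finrank_bot]
    · rw [finrank_span_singleton h]
  have h2 := le_trans (Submodule.finrank_mono hle) h1
  omega

lemma cpt_comm_E (hT : IsThinGrading F T Tc)
    {φ : ↥(Tcube F T Tc) →ₗ[F] ↥(Tcube F T Tc)} (hφ : φ ∈ adjGrend F T Tc)
    (w : ↥(Tcube F T Tc)) {i : ℕ} (hmem : cpt hT i (w : T) ∈ Tcube F T Tc) :
    ((φ ⟨cpt hT i (w : T), hmem⟩ : ↥(Tcube F T Tc)) : T) = cpt hT i ((φ w : ↥(Tcube F T Tc)) : T) := by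
  classical
  obtain ⟨s, hs0, hsum⟩ := sum_cpt hT (w : T)
  set wl : ℕ → ↥(Tcube F T Tc) :=
    fun l => ⟨cpt hT l (w : T), cpt_mem_Tcube hT w.2 l⟩ with hwl
  have hw : w = ∑ l ∈ s, wl l := by
    apply Subtype.ext
    rw [AddSubmonoidClass.coe_finset_sum]
    exact hsum.symm
  have hφw : ((φ w : ↥(Tcube F T Tc)) : T) = ∑ l ∈ s, ((φ (wl l) : ↥(Tcube F T Tc)) : T) := by
    conv_lhs => rw [hw]
    rw [map_sum, AddSubmonoidClass.coe_finset_sum]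
  have hterm : ∀ l ∈ s, cpt hT i ((φ (wl l) : ↥(Tcube F T Tc)) : T)
      = if l = i then ((φ (wl l) : ↥(Tcube F T Tc)) : T) else 0 := by
    intro l _
    by_cases h3 : 3 ≤ l
    · have hval : ((φ (wl l) : ↥(Tcube F T Tc)) : T) ∈ Tc l :=
        (mem_adjGrend_iff.mp hφ).1 l h3 (wl l) (cpt_mem hT l (w : T))
      by_cases hli : l = i
      · subst hli
        rw [if_pos rfl, cpt_of_mem hT hval]
      · rw [if_neg hli, cpt_of_mem_ne hT hli hval]
    · have hz : wl l = 0 := by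
        apply Subtype.ext
        exact cpt_Tcube_zero hT w.2 h3
      rw [hz, map_zero]
      simp
  have hmain : cpt hT i ((φ w : ↥(Tcube F T Tc)) : T)
      = if i ∈ s then ((φ (wl i) : ↥(Tcube F T Tc)) : T) else 0 := by
    rw [hφw, map_sum, Finset.sum_congr rfl hterm, Finset.sum_ite_eq' s i
      (fun l => ((φ (wl l) : ↥(Tcube F T Tc)) : T))]
  have hlift : (⟨cpt hT i (w : T), hmem⟩ : ↥(Tcube F T Tc)) = wl i := rfl
  by_cases his : i ∈ s
  · rw [hmain, if_pos his, hlift]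
  · rw [hmain, if_neg his, hlift]
    have : wl i = 0 := Subtype.ext (hs0 i his)
    rw [this, map_zero]
    rfl

lemma E_inj (hT : IsThinGrading F T Tc)
    (hJI : ∀ I : LieIdeal F T, IsGradedIdeal F Tc I → I ≠ ⊥ →
      Module.Finite F (T ⧸ (I : Submodule F T)))
    {φ : ↥(Tcube F T Tc) →ₗ[F] ↥(Tcube F T Tc)} (hφE : φ ∈ adjGrend F T Tc)
    (hφ0 : φ ≠ 0) {v : ↥(Tcube F T Tc)} (hv : φ v = 0) : v = 0 := by
  by_contra hv0
  -- the kernel, as an ideal of T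
  set K : Submodule F T := Submodule.map (Tcube F T Tc).subtype (LinearMap.ker φ) with hK
  set KI : LieIdeal F T :=
    { toSubmodule := K
      lie_mem := by
        intro t x hx
        obtain ⟨w, hwk, rfl⟩ := hx
        have hwk' : φ w = 0 := hwk
        have hcube : ⁅(w : T), t⁆ ∈ Tcube F T Tc := lie_mem_Tcube hT w.2 t
        have hprop := (mem_adjGrend_iff.mp hφE).2 w ⟨⁅(w : T), t⁆, hcube⟩ t rfl
        rw [hwk'] at hprop
        have h0 : φ (⟨⁅(w : T), t⁆, hcube⟩ : ↥(Tcube F T Tc)) = 0 := by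
          apply Subtype.ext
          rw [hprop]
          simp
        have hmem : ⁅(w : T), t⁆ ∈ K :=
          ⟨⟨⁅(w : T), t⁆, hcube⟩, h0, rfl⟩
        show ⁅t, ((w : T) : T)⁆ ∈ K
        have h2 : (⁅t, (w : T)⁆ : T) = -⁅(w : T), t⁆ := (lie_skew t (w : T)).symm
        rw [h2]
        exact neg_mem hmem } with hKI
  have hKne : KI ≠ ⊥ := by
    intro h
    apply hv0
    have : (v : T) ∈ K := ⟨v, hv, rfl⟩
    have h2 : (v : T) ∈ KI := this
    rw [h, LieSubmodule.mem_bot] at h2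
    exact Subtype.ext h2
  have hKgr : IsGradedIdeal F Tc KI := by
    refine le_antisymm ?_ (iSup_le fun i => iSup_le fun _ => inf_le_left)
    intro x hx
    obtain ⟨w, hwk, hwx⟩ := hx
    rw [← hwx]
    show ((w : T)) ∈ _
    refine mem_iSup_ge_of_cpt hT (m := 1) (fun i hi => ?_) (fun i _ => ?_)
    · have : i = 0 := by omega
      rw [this]
      exact cpt_zero hT _
    · refine ⟨?_, cpt_mem hT i _⟩
      by_cases h3 : 3 ≤ i
      · have hmem : cpt hT i (w : T) ∈ Tcube F T Tc := cpt_mem_Tcube hT w.2 i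
        have hcomm := cpt_comm_E hT hφE w hmem
        have hwk' : φ w = 0 := hwk
        rw [hwk'] at hcomm
        have h0 : φ (⟨cpt hT i (w : T), hmem⟩ : ↥(Tcube F T Tc)) = 0 := by
          apply Subtype.ext
          rw [hcomm]
          simp
        exact ⟨⟨cpt hT i (w : T), hmem⟩, h0, rfl⟩
      · rw [cpt_Tcube_zero hT w.2 h3]
        exact zero_mem _
  have hTK := hJI KI hKgr hKne
  -- the range, as an ideal of T
  set Rng : Submodule F T := Submodule.map (Tcube F T Tc).subtype (LinearMap.range φ)
    with hRng
  set RI : LieIdeal F T :=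
    { toSubmodule := Rng
      lie_mem := by
        intro t x hx
        obtain ⟨w, ⟨w0, rfl⟩, rfl⟩ := hx
        have hcube : ⁅(w0 : T), t⁆ ∈ Tcube F T Tc := lie_mem_Tcube hT w0.2 t
        have hprop := (mem_adjGrend_iff.mp hφE).2 w0 ⟨⁅(w0 : T), t⁆, hcube⟩ t rfl
        have hmem : ⁅((φ w0 : ↥(Tcube F T Tc)) : T), t⁆ ∈ Rng := by
          rw [← hprop]
          exact ⟨φ ⟨⁅(w0 : T), t⁆, hcube⟩, ⟨_, rfl⟩, rfl⟩
        have h2 : (⁅t, ((φ w0 : ↥(Tcube F T Tc)) : T)⁆ : T)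
            = -⁅((φ w0 : ↥(Tcube F T Tc)) : T), t⁆ := (lie_skew _ _).symm
        show ⁅t, ((φ w0 : ↥(Tcube F T Tc)) : T)⁆ ∈ Rng
        rw [h2]
        exact neg_mem hmem } with hRI
  have hRne : RI ≠ ⊥ := by
    intro h
    apply hφ0
    ext w
    by_contra hw
    have : ((φ w : ↥(Tcube F T Tc)) : T) ∈ Rng := ⟨φ w, ⟨w, rfl⟩, rfl⟩
    have h2 : ((φ w : ↥(Tcube F T Tc)) : T) ∈ RI := this
    rw [h, LieSubmodule.mem_bot] at h2
    exact hw (by simpa using Subtype.ext h2)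
  have hRgr : IsGradedIdeal F Tc RI := by
    refine le_antisymm ?_ (iSup_le fun i => iSup_le fun _ => inf_le_left)
    intro x hx
    obtain ⟨w, ⟨w0, rfl⟩, hwx⟩ := hx
    rw [← hwx]
    show ((φ w0 : ↥(Tcube F T Tc)) : T) ∈ _
    refine mem_iSup_ge_of_cpt hT (m := 1) (fun i hi => ?_) (fun i _ => ?_)
    · have : i = 0 := by omega
      rw [this]
      exact cpt_zero hT _
    · refine ⟨?_, cpt_mem hT i _⟩
      by_cases h3 : 3 ≤ i
      · have hmem : cpt hT i (w0 : T) ∈ Tcube F T Tc := cpt_mem_Tcube hT w0.2 i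
        have hcomm := cpt_comm_E hT hφE w0 hmem
        exact ⟨φ ⟨cpt hT i (w0 : T), hmem⟩, ⟨_, rfl⟩, hcomm⟩
      · rw [cpt_Tcube_zero hT (φ w0).2 h3]
        exact zero_mem _
  have hTR := hJI RI hRgr hRne
  -- Rng is finite dimensional
  haveI hTK' : FiniteDimensional F (T ⧸ K) := hTK
  have hq : FiniteDimensional F (↥(Tcube F T Tc) ⧸ LinearMap.ker φ) := by
    set ψ : (↥(Tcube F T Tc) ⧸ LinearMap.ker φ) →ₗ[F] T ⧸ K :=
      Submodule.mapQ _ _ (Tcube F T Tc).subtype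
        (fun w hw => Submodule.mem_map_of_mem hw) with hψ
    have hinj : Function.Injective ψ := by
      rw [← LinearMap.ker_eq_bot]
      rw [eq_bot_iff]
      intro q hq
      obtain ⟨w, rfl⟩ := Submodule.mkQ_surjective _ q
      have : ψ (Submodule.mkQ _ w) = Submodule.mkQ _ ((w : T)) := by
        rw [hψ]
        simp [Submodule.mapQ_apply]
      rw [LinearMap.mem_ker, this] at hq
      have hwK : (w : T) ∈ K := (Submodule.Quotient.mk_eq_zero _).mp hq
      obtain ⟨w2, hw2, hww⟩ := hwK
      have : w = w2 := Subtype.ext hww.symm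
      rw [Submodule.mem_bot, Submodule.mkQ_apply, Submodule.Quotient.mk_eq_zero, this]
      exact hw2
    exact FiniteDimensional.of_injective ψ hinj
  have hqr : FiniteDimensional F ↥(LinearMap.range φ) :=
    Module.Finite.equiv φ.quotKerEquivRange
  have hfinR : Module.Finite F ↥Rng := by
    rw [hRng]
    exact Module.Finite.map _ _
  have hTR' : Module.Finite F (T ⧸ Rng) := hTR
  exact not_finite_T hT (finite_of_sub_quot Rng hfinR hTR')

end S19

end S19Aux3
section S19Aux4

open Module LinearMap

variable {F : Type*} [Field F] {T : Type*} [LieRing T] [LieAlgebra F T]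
  {Tc : ℕ → Submodule F T}

namespace S19

lemma part1 (hT : IsThinGrading F T Tc)
    (hJI : ∀ I : LieIdeal F T, IsGradedIdeal F Tc I → I ≠ ⊥ →
      Module.Finite F (T ⧸ (I : Submodule F T)))
    (hE : Module.finrank F ↥(adjGrend F T Tc) = 2)
    {I : LieIdeal F T} (hne : I ≠ ⊥)
    (hab : ∀ x ∈ I, ∀ y ∈ I, ⁅x, y⁆ = (0 : T))
    (hGI : IsGradedIdeal F Tc I)
    (hmax : ∀ J : LieIdeal F T, J ≠ ⊥ → (∀ x ∈ J, ∀ y ∈ J, ⁅x, y⁆ = (0 : T)) →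
      IsGradedIdeal F Tc J → I ≤ J → I = J) :
    ∃ k : ℕ, 2 ≤ k ∧ (I : Submodule F T) = ⨆ i : ℕ, ⨆ _ : k ≤ i, Tc i := by
  classical
  have habS : ∀ a ∈ (I : Submodule F T), ∀ b ∈ (I : Submodule F T), ⁅a, b⁆ = (0 : T) :=
    fun a ha b hb => hab a ha b hb
  obtain hex := exists_tail_le hT hJI hGI hne
  set k := Nat.find hex with hkdef
  have hk := Nat.find_spec hex
  have hk1 : 1 ≤ k := hk.1
  have hk2 : 2 ≤ k := by
    by_contra hlt
    have hTc1 : Tc 1 ≤ (I : Submodule F T) := hk.2 1 (by omega)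
    have hTc2 : Tc 2 ≤ ⊥ := by
      refine le_trans (Tc_succ_le_bspan hT (le_refl 1)) ?_
      refine bspan_le_of fun u hu v hv => ?_
      have := habS u (hTc1 hu) v (hTc1 hv)
      simp [this]
    exact Tc_ne_bot hT (by omega : (1:ℕ) ≤ 2) (le_bot_iff.mp hTc2)
  have hbot : ∀ i, 1 ≤ i → i < k → (I : Submodule F T) ⊓ Tc i = ⊥ := by
    by_contra hcon
    push_neg at hcon
    obtain ⟨i0, hi01, hi0k, hi0ne⟩ := hcon
    have hproper : ∀ i, 1 ≤ i → i < k → ¬ Tc i ≤ (I : Submodule F T) := by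
      intro i h1 h2 hle
      have hP : 1 ≤ i ∧ ∀ m, i ≤ m → Tc m ≤ (I : Submodule F T) :=
        ⟨h1, Tc_tail_le_ideal hT h1 hle⟩
      have : k ≤ i := Nat.find_le (h := hex) hP
      omega
    set Q : ℕ → Prop := fun m => 1 ≤ m ∧ (I : Submodule F T) ⊓ Tc m ≠ ⊥ with hQ
    set j := Nat.findGreatest Q (k-1) with hjdef
    have hQi0 : Q i0 := ⟨hi01, hi0ne⟩
    have hQj : Q j := by
      rw [hjdef]
      exact Nat.findGreatest_spec (n := k-1) (m := i0) (by omega) hQi0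
    have hjle : j ≤ k - 1 := by
      rw [hjdef]
      exact Nat.findGreatest_le _
    obtain ⟨x0, hx0mem, hx0ne⟩ := (Submodule.ne_bot_iff _).mp hQj.2
    have hx0I : x0 ∈ (I : Submodule F T) := hx0mem.1
    have hx0Tc : x0 ∈ Tc j := hx0mem.2
    have hj1 : 1 ≤ j := hQj.1
    by_cases hjtop : j = k - 1
    swap
    · -- gap: x0 is central, contradiction
      have hlt1 : Nat.findGreatest Q (k-1) < j + 1 := by rw [← hjdef]; omega
      have hQj1 : ¬ Q (j+1) := Nat.findGreatest_is_greatest hlt1 (by omega)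
      have hbot1 : (I : Submodule F T) ⊓ Tc (j+1) = ⊥ := by
        by_contra hne1
        exact hQj1 ⟨by omega, hne1⟩
      have hcent : ∀ y ∈ Tc 1, ⁅x0, y⁆ = 0 := by
        intro y hy
        have h1 : ⁅x0, y⁆ ∈ (I : Submodule F T) := by
          have h1' : ⁅y, x0⁆ ∈ I := I.lie_mem hx0I
          have h2 : (⁅x0, y⁆ : T) = -⁅y, x0⁆ := (lie_skew x0 y).symm
          rw [h2]
          exact neg_mem h1'
        have h2 : ⁅x0, y⁆ ∈ Tc (j+1) := hT.lie_mem j 1 x0 hx0Tc y hy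
        have h3 : ⁅x0, y⁆ ∈ (⊥ : Submodule F T) := hbot1 ▸ Submodule.mem_inf.mpr ⟨h1, h2⟩
        simpa using h3
      exact hx0ne (eq_zero_of_lie_Tc1 hT hJI hj1 hx0Tc hcent)
    · by_cases h3 : 3 ≤ j
      · -- the main case, using E
        obtain ⟨θ, hθE, hθns⟩ := exists_nonscalar hE
        have hrank2 := hT.finrank_eq_two j hj1 (by omega)
        have hx0cube : x0 ∈ Tcube F T Tc := Tc_le_Tcube h3 hx0Tc
        set u : ↥(Tcube F T Tc) := ⟨x0, hx0cube⟩ with hudef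
        have hu0 : u ≠ 0 := fun h => hx0ne (congrArg Subtype.val h)
        have hwTc : ((θ u : ↥(Tcube F T Tc)) : T) ∈ Tc j :=
          (mem_adjGrend_iff.mp hθE).1 j h3 u hx0Tc
        by_cases hwI : ((θ u : ↥(Tcube F T Tc)) : T) ∈ (I : Submodule F T)
        · by_cases hind : LinearIndependent F ![x0, ((θ u : ↥(Tcube F T Tc)) : T)]
          · have hfull := full_of_pair
              (inf_le_right : (I : Submodule F T) ⊓ Tc j ≤ Tc j) hrank2
              (Submodule.mem_inf.mpr ⟨hx0I, hx0Tc⟩)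
              (Submodule.mem_inf.mpr ⟨hwI, hwTc⟩) hind
            exact hproper j hj1 (by omega) (le_trans hfull inf_le_left)
          · obtain ⟨c, hc⟩ := pair_dep hx0ne hind
            set φ := θ - c • (LinearMap.id : ↥(Tcube F T Tc) →ₗ[F] ↥(Tcube F T Tc))
              with hφdef
            have hφE : φ ∈ adjGrend F T Tc :=
              sub_mem hθE (Submodule.smul_mem _ c id_mem_adjGrend)
            have hφ0 : φ ≠ 0 := fun h => hθns c (by rwa [hφdef, sub_eq_zero] at h)
            have hφu : φ u = 0 := by
              apply Subtype.ext
              rw [hφdef]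
              simp only [LinearMap.sub_apply, LinearMap.smul_apply, LinearMap.id_apply]
              rw [AddSubgroupClass.coe_sub, SetLike.val_smul]
              show ((θ u : ↥(Tcube F T Tc)) : T) - c • x0 = (0 : ↥(Tcube F T Tc))
              rw [hc]
              simp
            exact hu0 (E_inj hT hJI hφE hφ0 hφu)
        · -- build a strictly bigger abelian graded ideal: contradiction
          set Jhat : Submodule F ↥(Tcube F T Tc) :=
            Submodule.comap (Tcube F T Tc).subtype (I : Submodule F T) with hJhatdef
          set S : Submodule F T :=
            Submodule.map (Tcube F T Tc).subtype (Submodule.map θ Jhat) with hSdef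
          have hScube : ∀ {sx : T}, sx ∈ S →
              ∃ vv : ↥(Tcube F T Tc), vv ∈ Jhat ∧ ((θ vv : ↥(Tcube F T Tc)) : T) = sx := by
            intro sx hsx
            obtain ⟨sw, hsw, hsx'⟩ := hsx
            obtain ⟨vv, hvv, rfl⟩ := hsw
            exact ⟨vv, hvv, hsx'⟩
          have hzero : ∀ vv : ↥(Tcube F T Tc), vv ∈ Jhat →
              ∀ a ∈ (I : Submodule F T), ⁅((θ vv : ↥(Tcube F T Tc)) : T), a⁆ = 0 := by
            intro vv hvv a ha
            have hlie : ⁅(vv : T), a⁆ ∈ Tcube F T Tc := lie_mem_Tcube hT vv.2 a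
            have hprop := (mem_adjGrend_iff.mp hθE).2 vv ⟨⁅(vv : T), a⁆, hlie⟩ a rfl
            have h00 : (⟨⁅(vv : T), a⁆, hlie⟩ : ↥(Tcube F T Tc)) = 0 :=
              Subtype.ext (habS (vv : T) hvv a ha)
            rw [h00, map_zero] at hprop
            rw [ZeroMemClass.coe_zero] at hprop
            exact hprop.symm
          set Isup : Submodule F T := (I : Submodule F T) ⊔ S with hIsupdef
          set Jnew : LieIdeal F T :=
            { toSubmodule := Isup
              lie_mem := by
                intro t x hx
                obtain ⟨a, ha, sx, hsx, rfl⟩ := Submodule.mem_sup.mp hx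
                obtain ⟨vv, hvv, rfl⟩ := hScube hsx
                show ⁅t, a + ((θ vv : ↥(Tcube F T Tc)) : T)⁆ ∈ Isup
                rw [lie_add]
                refine add_mem (Submodule.mem_sup_left (I.lie_mem ha)) ?_
                have hlie : ⁅(vv : T), t⁆ ∈ Tcube F T Tc := lie_mem_Tcube hT vv.2 t
                have hprop := (mem_adjGrend_iff.mp hθE).2 vv ⟨⁅(vv : T), t⁆, hlie⟩ t rfl
                have hvv' : (⟨⁅(vv : T), t⁆, hlie⟩ : ↥(Tcube F T Tc)) ∈ Jhat := by
                  show ⁅(vv : T), t⁆ ∈ (I : Submodule F T)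
                  have h1 : ⁅t, (vv : T)⁆ ∈ I := I.lie_mem hvv
                  have h2 : (⁅(vv : T), t⁆ : T) = -⁅t, (vv : T)⁆ := (lie_skew _ _).symm
                  rw [h2]
                  exact neg_mem h1
                have hmemS : ((θ (⟨⁅(vv : T), t⁆, hlie⟩ : ↥(Tcube F T Tc)) :
                    ↥(Tcube F T Tc)) : T) ∈ S :=
                  ⟨θ ⟨⁅(vv : T), t⁆, hlie⟩, ⟨_, hvv', rfl⟩, rfl⟩
                have h2 : (⁅t, ((θ vv : ↥(Tcube F T Tc)) : T)⁆ : T)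
                    = -⁅((θ vv : ↥(Tcube F T Tc)) : T), t⁆ := (lie_skew _ _).symm
                rw [h2, ← hprop]
                exact Submodule.mem_sup_right (neg_mem hmemS) } with hJnewdef
          have hJne : Jnew ≠ ⊥ := by
            intro h
            apply hne
            rw [LieSubmodule.eq_bot_iff] at h ⊢
            intro m hm
            exact h m (Submodule.mem_sup_left (show m ∈ (I : Submodule F T) from hm))
          have hJab : ∀ x ∈ Jnew, ∀ y ∈ Jnew, ⁅x, y⁆ = (0 : T) := by
            intro x hx y hy
            have hx' : x ∈ Isup := hx
            have hy' : y ∈ Isup := hy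
            obtain ⟨a, ha, sx, hsx, rfl⟩ := Submodule.mem_sup.mp hx'
            obtain ⟨b, hb, sy, hsy, rfl⟩ := Submodule.mem_sup.mp hy'
            obtain ⟨vv, hvv, rfl⟩ := hScube hsx
            obtain ⟨ww, hww, rfl⟩ := hScube hsy
            rw [lie_add, add_lie, add_lie]
            have t1 : ⁅a, b⁆ = (0:T) := habS a ha b hb
            have t2 : ⁅((θ vv : ↥(Tcube F T Tc)) : T), b⁆ = (0:T) := hzero vv hvv b hb
            have t3 : ⁅a, ((θ ww : ↥(Tcube F T Tc)) : T)⁆ = (0:T) := by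
              have h4 := hzero ww hww a ha
              rw [show (⁅a, ((θ ww : ↥(Tcube F T Tc)) : T)⁆ : T)
                = -⁅((θ ww : ↥(Tcube F T Tc)) : T), a⁆ from (lie_skew _ _).symm, h4,
                neg_zero]
            have t4 : ⁅((θ vv : ↥(Tcube F T Tc)) : T),
                ((θ ww : ↥(Tcube F T Tc)) : T)⁆ = (0:T) := by
              have hlie : ⁅(vv : T), ((θ ww : ↥(Tcube F T Tc)) : T)⁆ ∈ Tcube F T Tc :=
                lie_mem_Tcube hT vv.2 _
              have hprop := (mem_adjGrend_iff.mp hθE).2 vv ⟨_, hlie⟩ _ rfl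
              have hz : (⟨⁅(vv : T), ((θ ww : ↥(Tcube F T Tc)) : T)⁆, hlie⟩ :
                  ↥(Tcube F T Tc)) = 0 := by
                apply Subtype.ext
                show ⁅(vv : T), ((θ ww : ↥(Tcube F T Tc)) : T)⁆ = (0:T)
                have h5 := hzero ww hww (vv : T) hvv
                rw [show (⁅(vv : T), ((θ ww : ↥(Tcube F T Tc)) : T)⁆ : T)
                  = -⁅((θ ww : ↥(Tcube F T Tc)) : T), (vv : T)⁆ from (lie_skew _ _).symm,
                  h5, neg_zero]
              rw [hz, map_zero] at hprop
              rw [ZeroMemClass.coe_zero] at hprop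
              exact hprop.symm
            rw [t1, t2, t3, t4]
            simp
          have hJgr : IsGradedIdeal F Tc Jnew := by
            show (Jnew : Submodule F T)
              = ⨆ i, ⨆ _ : 1 ≤ i, ((Jnew : Submodule F T) ⊓ Tc i)
            have hcoe : (Jnew : Submodule F T) = Isup := rfl
            rw [hcoe]
            refine le_antisymm ?_ (iSup_le fun i => iSup_le fun _ => inf_le_left)
            refine sup_le ?_ ?_
            · conv_lhs => rw [hGI]
              refine iSup_le fun i => iSup_le fun hi => ?_
              exact le_trans (inf_le_inf_right (Tc i) le_sup_left)
                (le_iSup_ge (fun i => Isup ⊓ Tc i) hi)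
            · intro sx hsx
              obtain ⟨vv, hvv, rfl⟩ := hScube hsx
              refine mem_iSup_ge_of_cpt hT (m := 1) (fun i hi => ?_) (fun i _ => ?_)
              · have hi0 : i = 0 := by omega
                rw [hi0]
                exact cpt_zero hT _
              · refine Submodule.mem_inf.mpr ⟨?_, cpt_mem hT i _⟩
                by_cases h3i : 3 ≤ i
                · have hmem := cpt_mem_Tcube hT (vv : ↥(Tcube F T Tc)).2 i
                  have hcomm := cpt_comm_E hT hθE vv hmem
                  rw [← hcomm]
                  have hvmem : (⟨cpt hT i (vv : T), hmem⟩ : ↥(Tcube F T Tc)) ∈ Jhat := by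
                    show cpt hT i (vv : T) ∈ (I : Submodule F T)
                    exact graded_cpt_mem hT hGI hvv i
                  exact Submodule.mem_sup_right
                    ⟨θ ⟨cpt hT i (vv : T), hmem⟩, ⟨_, hvmem, rfl⟩, rfl⟩
                · rw [cpt_Tcube_zero hT (θ vv : ↥(Tcube F T Tc)).2 h3i]
                  exact zero_mem _
          have hle : I ≤ Jnew := by
            rw [← LieSubmodule.toSubmodule_le_toSubmodule]
            exact le_sup_left
          have heq := hmax Jnew hJne hJab hJgr hle
          apply hwI
          have hmemS : ((θ u : ↥(Tcube F T Tc)) : T) ∈ S :=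
            ⟨θ u, ⟨u, (show x0 ∈ (I : Submodule F T) from hx0I), rfl⟩, rfl⟩
          have hfin : ((θ u : ↥(Tcube F T Tc)) : T) ∈ (Jnew : Submodule F T) :=
            Submodule.mem_sup_right hmemS
          rw [← heq] at hfin
          exact hfin
      · -- j = 1 or j = 2
        have hj12 : j = 1 ∨ j = 2 := by omega
        rcases hj12 with hjeq | hjeq
        · -- j = 1, k = 2 : dimension contradiction in degree 3
          have hkeq : k = 2 := by omega
          have hx0Tc1 : x0 ∈ Tc 1 := hjeq ▸ hx0Tc
          have hy : ∃ y ∈ Tc 1, LinearIndependent F ![x0, y] := by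
            by_contra hcon2
            push_neg at hcon2
            have hle1 : Tc 1 ≤ Submodule.span F {x0} := by
              intro y hy1
              obtain ⟨c, hc⟩ := pair_dep hx0ne (hcon2 y hy1)
              rw [hc]
              exact Submodule.smul_mem _ _ (Submodule.mem_span_singleton_self x0)
            have hr1 : finrank F ↥(Tc 1) ≤ 1 := by
              have hm := Submodule.finrank_mono hle1
              rwa [finrank_span_singleton hx0ne] at hm
            have hr2 := hT.finrank_eq_two 1 le_rfl (by omega)
            omega
          obtain ⟨y, hyTc, hind⟩ := hy
          have hxyTc : Submodule.span F {x0, y} ≤ Tc 1 := by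
            rw [Submodule.span_le]
            rintro z (rfl | rfl)
            · exact hx0Tc1
            · exact hyTc
          have hfull1 : Tc 1 ≤ Submodule.span F {x0, y} :=
            full_of_pair hxyTc (hT.finrank_eq_two 1 le_rfl (by omega))
              (Submodule.subset_span (Set.mem_insert _ _))
              (Submodule.subset_span (Set.mem_insert_of_mem _ rfl)) hind
          obtain ⟨z, hzTc, hzne⟩ := (Submodule.ne_bot_iff _).mp
            (Tc_ne_bot hT (show (1:ℕ) ≤ 2 by omega))
          have hz2 : Tc 2 ≤ Submodule.span F {z} := by
            refine full_of_rank_one ?_ hT.finrank_two ?_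
            · rw [Submodule.span_le]
              rintro w rfl
              exact hzTc
            · simpa [Submodule.span_singleton_eq_bot] using hzne
          have hTc2I : Tc 2 ≤ (I : Submodule F T) := hk.2 2 (by omega)
          have hT3 : Tc 3 ≤ Submodule.span F {⁅z, y⁆} := by
            refine le_trans (Tc_succ_le_bspan hT (by omega : 1 ≤ 2)) ?_
            refine bspan_le_of fun u hu v hv => ?_
            obtain ⟨a, ha⟩ := Submodule.mem_span_singleton.mp (hz2 hu)
            obtain ⟨b, c, hbc⟩ := Submodule.mem_span_pair.mp (hfull1 hv)
            have hzx : ⁅z, x0⁆ = (0:T) := habS z (hTc2I hzTc) x0 hx0I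
            rw [← ha, ← hbc]
            rw [smul_lie, lie_add, lie_smul, lie_smul, hzx, smul_zero, zero_add]
            exact Submodule.smul_mem _ _ (Submodule.smul_mem _ _
              (Submodule.mem_span_singleton_self _))
          have hr3 : finrank F ↥(Tc 3) ≤ 1 := by
            have hmono := Submodule.finrank_mono hT3
            have hr : finrank F ↥(Submodule.span F {(⁅z, y⁆ : T)}) ≤ 1 := by
              by_cases h0 : (⁅z, y⁆ : T) = 0
              · rw [h0, Submodule.span_zero_singleton]
                simp
              · rw [finrank_span_singleton h0]
            omega
          have hr4 := hT.finrank_eq_two 3 (by omega) (by omega)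
          omega
        · -- j = 2, k = 3 : Tc 2 is one-dimensional, so it lies in I
          have hQj2 : (I : Submodule F T) ⊓ Tc 2 ≠ ⊥ := hjeq ▸ hQj.2
          have hfull2 : Tc 2 ≤ (I : Submodule F T) ⊓ Tc 2 :=
            full_of_rank_one inf_le_right hT.finrank_two hQj2
          exact hproper 2 (by omega) (by omega) (le_trans hfull2 inf_le_left)
  refine ⟨k, hk2, le_antisymm ?_ ?_⟩
  · conv_lhs => rw [hGI]
    refine iSup_le fun i => iSup_le fun hi => ?_
    by_cases hik : k ≤ i
    · exact le_trans inf_le_right (le_iSup_ge Tc hik)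
    · rw [hbot i hi (by omega)]
      exact bot_le
  · exact iSup_le fun i => iSup_le fun hik => hk.2 i hik

end S19

end S19Aux4
/-- if the ring `E` of degree-0 graded `T`-endomorphisms of `T³` has
`dim_F E = 2`, then every maximal element of the set of nonzero abelian graded ideals of
`T` equals `T^k = ⊕_{i ≥ k} T_i` for some `k ≥ 2`; consequently `T` has at most one
maximal nonzero abelian graded ideal. -/
theorem stmt_19 (F : Type*) [Field F] (T : Type*) [LieRing T] [LieAlgebra F T]
    (Tc : ℕ → Submodule F T) (hT : IsThinGrading F T Tc)
    (hJI : ∀ I : LieIdeal F T, IsGradedIdeal F Tc I → I ≠ ⊥ →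
      Module.Finite F (T ⧸ (I : Submodule F T)))
    (hE : Module.finrank F ↥(adjGrend F T Tc) = 2) :
    (∀ I : LieIdeal F T, I ≠ ⊥ → (∀ x ∈ I, ∀ y ∈ I, ⁅x, y⁆ = (0 : T)) →
      IsGradedIdeal F Tc I →
      (∀ J : LieIdeal F T, J ≠ ⊥ → (∀ x ∈ J, ∀ y ∈ J, ⁅x, y⁆ = (0 : T)) →
        IsGradedIdeal F Tc J → I ≤ J → I = J) →
      ∃ k : ℕ, 2 ≤ k ∧ (I : Submodule F T) = ⨆ i : ℕ, ⨆ _ : k ≤ i, Tc i) ∧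
    (∀ I J : LieIdeal F T,
      (I ≠ ⊥ ∧ (∀ x ∈ I, ∀ y ∈ I, ⁅x, y⁆ = (0 : T)) ∧ IsGradedIdeal F Tc I ∧
        ∀ I' : LieIdeal F T, I' ≠ ⊥ → (∀ x ∈ I', ∀ y ∈ I', ⁅x, y⁆ = (0 : T)) →
          IsGradedIdeal F Tc I' → I ≤ I' → I = I') →
      (J ≠ ⊥ ∧ (∀ x ∈ J, ∀ y ∈ J, ⁅x, y⁆ = (0 : T)) ∧ IsGradedIdeal F Tc J ∧
        ∀ J' : LieIdeal F T, J' ≠ ⊥ → (∀ x ∈ J', ∀ y ∈ J', ⁅x, y⁆ = (0 : T)) →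
          IsGradedIdeal F Tc J' → J ≤ J' → J = J') →
      I = J) := by
  constructor
  · intro I hne hab hGI hmax
    exact S19.part1 hT hJI hE hne hab hGI hmax
  · intro I J hI hJ
    obtain ⟨kI, hkI2, hkIeq⟩ := S19.part1 hT hJI hE hI.1 hI.2.1 hI.2.2.1 hI.2.2.2
    obtain ⟨kJ, hkJ2, hkJeq⟩ := S19.part1 hT hJI hE hJ.1 hJ.2.1 hJ.2.2.1 hJ.2.2.2
    have hkIeq' : (LieSubmodule.toSubmodule I : Submodule F T)
        = ⨆ i : ℕ, ⨆ _ : kI ≤ i, Tc i := hkIeq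
    have hkJeq' : (LieSubmodule.toSubmodule J : Submodule F T)
        = ⨆ i : ℕ, ⨆ _ : kJ ≤ i, Tc i := hkJeq
    rcases le_total kI kJ with h | h
    · have hle : J ≤ I := by
        rw [← LieSubmodule.toSubmodule_le_toSubmodule, hkIeq', hkJeq']
        exact iSup_le fun i => iSup_le fun hi => S19.le_iSup_ge Tc (le_trans h hi)
      exact (hJ.2.2.2 I hI.1 hI.2.1 hI.2.2.1 hle).symm
    · have hle : I ≤ J := by
        rw [← LieSubmodule.toSubmodule_le_toSubmodule, hkIeq', hkJeq']
        exact iSup_le fun i => iSup_le fun hi => S19.le_iSup_ge Tc (le_trans h hi)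
      exact hI.2.2.2 J hJ.1 hJ.2.1 hJ.2.2.1 hle
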